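/- Let n be a positive integer, let g, h be invertible n × n real matrices, let X be a symmetric n × n real matrix whose Frobenius norm is 1 (i.e. the sum of the squares of its entries equals 1), and let d ≥ 0 be a real number. Suppose h · exp(d·X) · hᵀ = g · h · hᵀ · gᵀ, where exp denotes the matrix exponential and ᵀ the transpose. Then |log((det g)²)| ≤ d·√n; equivalently, d ≥ |log((det g)²)|/√n. -/

import Mathlib

open Matrix

/-- `det (exp A) = exp (trace A)` for a real Hermitian (symmetric) matrix,
via the spectral theorem. -/
lemma det_exp_of_isHermitian {n : ℕ} {A : Matrix (Fin n) (Fin n) ℝ}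
    (hA : A.IsHermitian) :
    (NormedSpace.exp A).det = Real.exp A.trace := by
  set U : Matrix (Fin n) (Fin n) ℝ := (hA.eigenvectorUnitary : Matrix (Fin n) (Fin n) ℝ)
  have hU : U ∈ Matrix.unitaryGroup (Fin n) ℝ := hA.eigenvectorUnitary.2
  have hUstar : star U * U = 1 := hU.1
  have hUstar' : U * star U = 1 := hU.2
  have hUnit : IsUnit U := ⟨⟨U, star U, hUstar', hUstar⟩, rfl⟩
  have hinv : U⁻¹ = star U := Matrix.inv_eq_right_inv hUstar'
  have hspec : A = U * Matrix.diagonal hA.eigenvalues * U⁻¹ := by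
    rw [hinv]
    simpa using hA.spectral_theorem
  have hexp : NormedSpace.exp A
      = U * NormedSpace.exp (Matrix.diagonal hA.eigenvalues) * U⁻¹ := by
    conv_lhs => rw [hspec]
    exact Matrix.exp_conj U _ hUnit
  have hdiag : NormedSpace.exp (Matrix.diagonal hA.eigenvalues)
      = Matrix.diagonal (fun i => Real.exp (hA.eigenvalues i)) := by
    rw [Matrix.exp_diagonal, Pi.exp_def]
    simp [Real.exp_eq_exp_ℝ]
  have htrace : A.trace = ∑ i, hA.eigenvalues i := by
    conv_lhs => rw [hspec]
    rw [Matrix.trace_mul_cycle, hinv, hUstar, one_mul, Matrix.trace_diagonal]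
  have hdetU : U.det * U⁻¹.det = 1 := by
    rw [← Matrix.det_mul, mul_nonsing_inv U (hUnit.map (Matrix.detMonoidHom (n := Fin n)))]
    exact Matrix.det_one
  calc (NormedSpace.exp A).det
      = U.det * (Matrix.diagonal fun i => Real.exp (hA.eigenvalues i)).det * U⁻¹.det := by
        rw [hexp, hdiag, Matrix.det_mul, Matrix.det_mul]
    _ = (Matrix.diagonal fun i => Real.exp (hA.eigenvalues i)).det := by
        rw [mul_comm U.det, mul_assoc, hdetU, mul_one]
    _ = ∏ i, Real.exp (hA.eigenvalues i) := Matrix.det_diagonal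
    _ = Real.exp (∑ i, hA.eigenvalues i) := (Real.exp_sum _ _).symm
    _ = Real.exp A.trace := by rw [htrace]

/-- Linear-algebraic core of Lemma "PVEstimate": if a unit-speed geodesic
`t ↦ h · exp(t X) · hᵀ` in the space of positive definite matrices joins `p = h hᵀ`
to `g p gᵀ` at time `d`, then `d ≥ |log (det g)²| / √n`. -/
theorem log_det_sq_le_dist
    (n : ℕ) (hn : 0 < n)
    (g h X : Matrix (Fin n) (Fin n) ℝ)
    (hg : IsUnit g.det) (hh : IsUnit h.det)
    (hX : X.IsSymm)
    (hXnorm : ∑ i : Fin n, ∑ j : Fin n, (X i j) ^ 2 = 1)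
    (d : ℝ) (hd : 0 ≤ d)
    (heq : h * NormedSpace.exp (d • X) * h.transpose =
      g * h * h.transpose * g.transpose) :
    |Real.log ((g.det) ^ 2)| ≤ d * Real.sqrt n := by
  -- `d • X` is symmetric, hence Hermitian over ℝ
  have hXherm : (d • X).IsHermitian := by
    rw [Matrix.IsHermitian, Matrix.conjTranspose_eq_transpose_of_trivial]
    exact (hX.smul d)
  have hhne : h.det ≠ 0 := hh.ne_zero
  -- take determinants
  have hdet := congrArg Matrix.det heq
  simp only [Matrix.det_mul, Matrix.det_transpose,
    det_exp_of_isHermitian hXherm] at hdet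
  have key : Real.exp (d * X.trace) = g.det ^ 2 := by
    have h2 : (Real.exp ((d • X).trace) - g.det ^ 2) * (h.det * h.det) = 0 := by
      linear_combination hdet
    have h3 : Real.exp ((d • X).trace) = g.det ^ 2 := by
      rcases mul_eq_zero.mp h2 with h2 | h2
      · linarith
      · exact absurd h2 (mul_ne_zero hhne hhne)
    rwa [Matrix.trace_smul, smul_eq_mul] at h3
  have hlog : Real.log (g.det ^ 2) = d * X.trace := by
    rw [← key, Real.log_exp]
  -- Cauchy–Schwarz on the diagonal entries
  have hdiag_le : ∑ i : Fin n, (X i i) ^ 2 ≤ 1 := by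
    rw [← hXnorm]
    apply Finset.sum_le_sum
    intro i _
    exact Finset.single_le_sum (f := fun j => (X i j) ^ 2)
      (fun j _ => sq_nonneg _) (Finset.mem_univ i)
  have htr_sq : X.trace ^ 2 ≤ n := by
    have hcs := sq_sum_le_card_mul_sum_sq (s := Finset.univ)
      (f := fun i : Fin n => X i i)
    simp only [Finset.card_univ, Fintype.card_fin] at hcs
    calc X.trace ^ 2 = (∑ i : Fin n, X i i) ^ 2 := by rw [Matrix.trace]; rfl
      _ ≤ n * ∑ i : Fin n, (X i i) ^ 2 := hcs
      _ ≤ n * 1 := by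
          apply mul_le_mul_of_nonneg_left hdiag_le (Nat.cast_nonneg n)
      _ = n := mul_one _
  have htr_abs : |X.trace| ≤ Real.sqrt n := by
    rw [← Real.sqrt_sq_eq_abs]
    exact Real.sqrt_le_sqrt htr_sq
  calc |Real.log (g.det ^ 2)| = |d * X.trace| := by rw [hlog]
    _ = d * |X.trace| := by rw [abs_mul, abs_of_nonneg hd]
    _ ≤ d * Real.sqrt n := mul_le_mul_of_nonneg_left htr_abs hd
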